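/- Let p > 1 be an integer, m ≥ 1, and x^1, ..., x^m non-negative integers. For every h with 0 ≤ h < x^1 ⊕_p ⋯ ⊕_p x^m, there exist non-negative integers y^1, ..., y^m with y^i ≤ x^i for all i, y^1 ⊕_p ⋯ ⊕_p y^m = h, the Hamming distance between (x^i) and (y^i) is less than min(p, m+1), and ord_p(∑_i (x^i - y^i)) = min_i ord_p(x^i - y^i). -/

import Mathlib

/-- The `L`-th digit of `x` in base `p`. -/
def digit (p L x : ℕ) : ℕ := x / p ^ L % p

/-- `p`-ary addition without carry of a finite family: the `L`-th `p`-ary digit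
is the sum of the `L`-th digits mod `p` (iterated `⊕_p`). -/
def oplusSum {ι : Type*} (p : ℕ) (s : Finset ι) (f : ι → ℕ) : ℕ :=
  ∑ L ∈ Finset.range (∑ i ∈ s, f i + 1), (∑ i ∈ s, digit p L (f i)) % p * p ^ L

/-- `p`-adic order of a natural number, with `ord 0 = ∞`. -/
noncomputable def ordE (p x : ℕ) : ℕ∞ := if x = 0 then ⊤ else (padicValNat p x : ℕ∞)

section aux
variable {p : ℕ}

lemma digit_lt' (hp : 1 < p) (L x : ℕ) : digit p L x < p := Nat.mod_lt _ (by omega)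

lemma digit_eq_zero_of_lt' {L x : ℕ} (h : x < p ^ L) : digit p L x = 0 := by
  unfold digit; rw [Nat.div_eq_of_lt h]; simp

lemma digit_eq' (L x : ℕ) : digit p L x = x % p ^ (L + 1) / p ^ L := by
  unfold digit
  rw [← Nat.mod_mul_right_div_self, pow_succ]

lemma digit_mod_pow' {L M : ℕ} (hLM : L < M) (x : ℕ) :
    digit p L (x % p ^ M) = digit p L x := by
  rw [digit_eq', digit_eq', Nat.mod_mod_of_dvd _ (pow_dvd_pow _ hLM)]

lemma mod_pow_succ' (M x : ℕ) :
    x % p ^ (M + 1) = x % p ^ M + digit p M x * p ^ M := by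
  conv_lhs => rw [← Nat.mod_add_div (x % p ^ (M+1)) (p ^ M)]
  rw [Nat.mod_mod_of_dvd _ (pow_dvd_pow _ (Nat.le_succ M)), ← digit_eq']
  ring

lemma mod_pow_eq_sum' (M x : ℕ) :
    x % p ^ M = ∑ L ∈ Finset.range M, digit p L x * p ^ L := by
  induction M with
  | zero => simp [Nat.mod_one]
  | succ M ih => rw [Finset.sum_range_succ, ← ih, mod_pow_succ']

lemma eq_sum_digit' {M x : ℕ} (h : x < p ^ M) :
    x = ∑ L ∈ Finset.range M, digit p L x * p ^ L := by
  rw [← mod_pow_eq_sum', Nat.mod_eq_of_lt h]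

lemma shift_sum' (c : ℕ → ℕ) (M : ℕ) :
    ∑ ℓ ∈ Finset.range (M+1), c ℓ * p ^ ℓ
      = c 0 + p * ∑ i ∈ Finset.range M, c (i+1) * p ^ i := by
  rw [Finset.sum_range_succ', Finset.mul_sum]
  simp only [pow_zero, mul_one, pow_succ']
  rw [add_comm]
  congr 1
  exact Finset.sum_congr rfl (fun i _ => by ring)

lemma digitSum_lt' (hp : 1 < p) {M : ℕ} {c : ℕ → ℕ} (hc : ∀ ℓ, ℓ < M → c ℓ < p) :
    ∑ L ∈ Finset.range M, c L * p ^ L < p ^ M := by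
  induction M with
  | zero => simp
  | succ M ih =>
    rw [Finset.sum_range_succ, pow_succ]
    have h1 : ∑ L ∈ Finset.range M, c L * p ^ L < p ^ M :=
      ih (fun ℓ hℓ => hc ℓ (by omega))
    have h2 : c M ≤ p - 1 := by have := hc M (by omega); omega
    have h3 : c M * p ^ M ≤ (p - 1) * p ^ M := Nat.mul_le_mul_right _ h2
    have h4 : (p - 1) * p ^ M + p ^ M = p ^ M * p := by
      have h5 : p - 1 + 1 = p := by omega
      calc (p - 1) * p ^ M + p ^ M = (p - 1 + 1) * p ^ M := by ring
        _ = p ^ M * p := by rw [h5]; ring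
    omega

lemma digit_digitSum' (hp : 1 < p) {M : ℕ} {c : ℕ → ℕ} (hc : ∀ ℓ, ℓ < M → c ℓ < p) (L : ℕ) :
    digit p L (∑ ℓ ∈ Finset.range M, c ℓ * p ^ ℓ) = if L < M then c L else 0 := by
  induction L generalizing M c with
  | zero =>
    cases M with
    | zero => simp [digit]
    | succ M =>
      rw [shift_sum']
      simp only [digit, pow_zero, Nat.div_one]
      rw [Nat.add_mul_mod_self_left, Nat.mod_eq_of_lt (hc 0 (by omega))]
      simp
  | succ L ihL =>
    cases M with
    | zero => simp [digit]
    | succ M =>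
      rw [shift_sum']
      have hdiv : (c 0 + p * ∑ i ∈ Finset.range M, c (i+1) * p ^ i) / p
          = ∑ i ∈ Finset.range M, c (i+1) * p ^ i := by
        rw [Nat.add_mul_div_left _ _ (by omega : 0 < p),
          Nat.div_eq_of_lt (hc 0 (by omega))]
        omega
      have hkey : digit p (L+1) (c 0 + p * ∑ i ∈ Finset.range M, c (i+1) * p ^ i)
          = digit p L (∑ i ∈ Finset.range M, c (i+1) * p ^ i) := by
        unfold digit
        rw [pow_succ', ← Nat.div_div_eq_div_mul, hdiv]
      rw [hkey, ihL (fun ℓ hℓ => hc (ℓ+1) (by omega))]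
      simp only [Nat.add_lt_add_iff_right]

lemma digit_ext' (hp : 1 < p) {a b : ℕ} (h : ∀ ℓ, digit p ℓ a = digit p ℓ b) : a = b := by
  set M := a + b + 1 with hM
  have ha : a < p ^ M := lt_of_le_of_lt (by omega) (Nat.lt_pow_self (n := M) hp)
  have hb : b < p ^ M := lt_of_le_of_lt (by omega) (Nat.lt_pow_self (n := M) hp)
  rw [eq_sum_digit' ha, eq_sum_digit' hb]
  exact Finset.sum_congr rfl (fun ℓ _ => by rw [h ℓ])

lemma digit_oplusSum' (hp : 1 < p) {ι : Type*} (s : Finset ι) (f : ι → ℕ) (L : ℕ) :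
    digit p L (oplusSum p s f) = (∑ i ∈ s, digit p L (f i)) % p := by
  unfold oplusSum
  set M := ∑ i ∈ s, f i + 1 with hM
  rw [digit_digitSum' hp (fun ℓ _ => Nat.mod_lt _ (by omega)) L]
  by_cases hL : L < M
  · simp [hL]
  · simp only [hL, if_false]
    have hz : ∀ i ∈ s, digit p L (f i) = 0 := by
      intro i hi
      apply digit_eq_zero_of_lt'
      have h1 : f i ≤ ∑ j ∈ s, f j := Finset.single_le_sum (fun j _ => Nat.zero_le _) hi
      have h2 : M ≤ p ^ M := Nat.le_of_lt (Nat.lt_pow_self (n := M) hp)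
      have h3 : p ^ M ≤ p ^ L := pow_le_pow_right₀ (by omega) (by omega)
      omega
    rw [Finset.sum_congr rfl hz]
    simp

/-- highest differing digit -/
lemma exists_top_digit' (hp : 1 < p) {h X : ℕ} (hlt : h < X) :
    ∃ L, digit p L h < digit p L X ∧ ∀ ℓ, L < ℓ → digit p ℓ h = digit p ℓ X := by
  obtain ⟨M, hM⟩ : ∃ M, X < p ^ M := ⟨X, Nat.lt_pow_self (n := X) hp⟩
  induction M generalizing h X with
  | zero => simp at hM; omega
  | succ M ih =>
    have hpM : 0 < p ^ M := by positivity
    by_cases hq : h / p ^ M = X / p ^ M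
    · have h1 := Nat.mod_add_div h (p ^ M)
      have h2 := Nat.mod_add_div X (p ^ M)
      rw [hq] at h1
      have hmodlt : h % p ^ M < X % p ^ M := by omega
      obtain ⟨L, hL1, hL2⟩ := ih hmodlt (Nat.mod_lt _ hpM)
      have hLM : L < M := by
        by_contra hc
        push_neg at hc
        have := digit_eq_zero_of_lt' (p := p) (L := L) (x := X % p ^ M)
          (lt_of_lt_of_le (Nat.mod_lt X hpM) (pow_le_pow_right₀ (by omega) hc))
        omega
      refine ⟨L, by rwa [digit_mod_pow' hLM, digit_mod_pow' hLM] at hL1, ?_⟩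
      intro ℓ hℓ
      by_cases hℓM : ℓ < M
      · have := hL2 ℓ hℓ
        rwa [digit_mod_pow' hℓM, digit_mod_pow' hℓM] at this
      · push_neg at hℓM
        unfold digit
        have hdh : h / p ^ ℓ = (h / p ^ M) / p ^ (ℓ - M) := by
          rw [Nat.div_div_eq_div_mul, ← pow_add]
          congr 2
          omega
        have hdX : X / p ^ ℓ = (X / p ^ M) / p ^ (ℓ - M) := by
          rw [Nat.div_div_eq_div_mul, ← pow_add]
          congr 2
          omega
        rw [hdh, hdX, hq]
    · have hqlt : h / p ^ M < X / p ^ M := by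
        have := Nat.div_le_div_right (c := p ^ M) (Nat.le_of_lt hlt)
        omega
      have hXd : X / p ^ M < p := by
        rw [Nat.div_lt_iff_lt_mul hpM, ← pow_succ']
        exact hM
      refine ⟨M, ?_, ?_⟩
      · unfold digit
        rw [Nat.mod_eq_of_lt hXd, Nat.mod_eq_of_lt (by omega)]
        exact hqlt
      · intro ℓ hℓ
        have h1 : X < p ^ ℓ := lt_of_lt_of_le hM (pow_le_pow_right₀ (by omega) hℓ)
        rw [digit_eq_zero_of_lt' h1, digit_eq_zero_of_lt' (lt_trans hlt h1)]

/-- greedy subset selection -/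
lemma greedy' {ι : Type*} [DecidableEq ι] (s : Finset ι) (a : ι → ℕ) (d : ℕ)
    (hd : d ≤ ∑ i ∈ s, a i) :
    ∃ t : ι → ℕ, (∀ i, t i ≤ a i) ∧ (∀ i, i ∉ s → t i = 0) ∧ (∑ i ∈ s, t i = d) ∧
      (s.filter fun i => t i ≠ 0).card ≤ d := by
  induction s using Finset.induction_on generalizing d with
  | empty =>
    simp at hd
    exact ⟨fun _ => 0, fun i => Nat.zero_le _, fun _ _ => rfl, by simp [hd], by simp⟩
  | insert _ _ hx ih =>
    rename_i i s'
    rw [Finset.sum_insert hx] at hd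
    obtain ⟨t, ht1, ht2, ht3, ht4⟩ := ih (d - min (a i) d) (by omega)
    have hupd : ∀ j, j ≠ i → Function.update t i (min (a i) d) j = t j :=
      fun j hj => Function.update_of_ne hj _ _
    refine ⟨Function.update t i (min (a i) d), ?_, ?_, ?_, ?_⟩
    · intro j
      by_cases hj : j = i
      · subst hj; rw [Function.update_self]; omega
      · rw [hupd j hj]; exact ht1 j
    · intro j hj
      have hji : j ≠ i := by rintro rfl; exact hj (Finset.mem_insert_self _ _)
      rw [hupd j hji]
      exact ht2 j (fun hjs => hj (Finset.mem_insert_of_mem hjs))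
    · rw [Finset.sum_insert hx, Function.update_self,
        Finset.sum_congr rfl (fun j hj => hupd j (fun hji => hx (hji ▸ hj))), ht3]
      omega
    · rw [Finset.filter_insert]
      have hcong : (s'.filter fun j => Function.update t i (min (a i) d) j ≠ 0)
          = (s'.filter fun j => t j ≠ 0) :=
        Finset.filter_congr (fun j hj => by rw [hupd j (fun hji => hx (hji ▸ hj))])
      by_cases hmin : min (a i) d = 0
      · rw [if_neg (by simp [Function.update_self, hmin]), hcong]
        exact le_trans ht4 (by omega)
      · rw [if_pos (by simp [Function.update_self, hmin]),
          Finset.card_insert_of_notMem (fun hc => hx (Finset.mem_filter.1 hc).1), hcong]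
        omega

lemma val_not_dvd' (hp : 1 < p) {n : ℕ} (hn : 0 < n) :
    ¬ p ^ (padicValNat p n + 1) ∣ n := by
  intro hdvd
  have := (Nat.pow_dvd_iff_le_padicValNat (by omega) (by omega)).1 hdvd
  omega

lemma val_eq' (hp : 1 < p) {n k : ℕ} (hn : 0 < n) (h1 : p ^ k ∣ n)
    (h2 : ¬ p ^ (k + 1) ∣ n) : padicValNat p n = k := by
  have hd := pow_padicValNat_dvd (p := p) (n := n)
  have hle : k ≤ padicValNat p n := (Nat.pow_dvd_iff_le_padicValNat (by omega) (by omega)).1 h1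
  by_contra hne
  have hk1 : k + 1 ≤ padicValNat p n := by omega
  exact h2 (dvd_trans (pow_dvd_pow p hk1) hd)

lemma val_mul_pow' (hp : 1 < p) {L t : ℕ} (ht0 : 0 < t) (htp : t < p) :
    padicValNat p (t * p ^ L) = L := by
  have hpL : 0 < p ^ L := by positivity
  apply val_eq' hp (by positivity)
  · exact ⟨t, mul_comm _ _⟩
  · rintro ⟨c, hc⟩
    rw [pow_succ] at hc
    have ht : t = p * c := by
      have h2 : p ^ L * t = p ^ L * (p * c) := by ring_nf at hc ⊢; linarith
      exact Nat.eq_of_mul_eq_mul_left hpL h2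
    rcases Nat.eq_zero_or_pos c with hc0 | hc0
    · subst hc0; simp at ht; omega
    · nlinarith

lemma w_decomp' (hp : 1 < p) {w L : ℕ} (hw0 : 0 < w) (hwL : w < p ^ L) :
    ∃ v u, v < L ∧ 0 < u ∧ ¬ p ∣ u ∧ u < p ^ (L - v) ∧ w = p ^ v * u ∧
      padicValNat p w = v := by
  obtain ⟨u, hu⟩ : p ^ (padicValNat p w) ∣ w := pow_padicValNat_dvd
  set v := padicValNat p w with hv
  have hpv : 0 < p ^ v := by positivity
  have hu0 : 0 < u := by
    rcases Nat.eq_zero_or_pos u with h | h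
    · rw [h, mul_zero] at hu; omega
    · exact h
  have hpu : ¬ p ∣ u := by
    rintro ⟨c, hc⟩
    apply val_not_dvd' hp hw0
    rw [← hv, hu, hc, pow_succ]
    exact ⟨c, by ring⟩
  have hvL : v < L := by
    have h1 : p ^ v ≤ w := by rw [hu]; nlinarith
    exact (pow_lt_pow_iff_right₀ hp (n := v) (m := L)).mp (by omega)
  refine ⟨v, u, hvL, hu0, hpu, ?_, hu, rfl⟩
  have h3 : p ^ v * u < p ^ v * p ^ (L - v) := by
    rw [← pow_add]
    have h4 : v + (L - v) = L := by omega
    rw [h4, ← hu]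
    exact hwL
  exact lt_of_mul_lt_mul_left h3 (Nat.zero_le _)

lemma val_add_w' (hp : 1 < p) {L t w : ℕ} (ht0 : 0 < t) (htp : t < p)
    (hw0 : 0 < w) (hwL : w < p ^ L) :
    padicValNat p (t * p ^ L + w) = padicValNat p w := by
  obtain ⟨v, u, hvL, hu0, hpu, huL, hw, hval⟩ := w_decomp' hp hw0 hwL
  rw [hval]
  have hLsplit : p ^ L = p ^ v * p ^ (L - v) := by rw [← pow_add]; congr 1; omega
  have hn : t * p ^ L + w = p ^ v * (t * p ^ (L - v) + u) := by
    rw [hw, hLsplit]; ring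
  apply val_eq' hp (by positivity)
  · rw [hn]; exact ⟨_, rfl⟩
  · rintro ⟨c, hc⟩
    rw [hn, pow_succ'] at hc
    have hc2 : t * p ^ (L - v) + u = p * c := by
      have hpvpos : 0 < p ^ v := by positivity
      have h5 : p ^ v * (t * p ^ (L - v) + u) = p ^ v * (p * c) := by rw [hc]; ring
      exact Nat.eq_of_mul_eq_mul_left hpvpos h5
    have hdvd1 : p ∣ t * p ^ (L - v) :=
      Dvd.dvd.mul_left (dvd_pow_self p (by omega)) t
    exact hpu ((Nat.dvd_add_right hdvd1).mp ⟨c, hc2⟩)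

lemma val_sub_w' (hp : 1 < p) {L t w : ℕ} (ht0 : 0 < t) (htp : t < p)
    (hw0 : 0 < w) (hwL : w < p ^ L) :
    0 < t * p ^ L - w ∧ padicValNat p (t * p ^ L - w) = padicValNat p w := by
  obtain ⟨v, u, hvL, hu0, hpu, huL, hw, hval⟩ := w_decomp' hp hw0 hwL
  have hLsplit : p ^ L = p ^ v * p ^ (L - v) := by rw [← pow_add]; congr 1; omega
  have hupos : u < t * p ^ (L - v) := lt_of_lt_of_le huL (Nat.le_mul_of_pos_left _ ht0)
  have hn : t * p ^ L - w = p ^ v * (t * p ^ (L - v) - u) := by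
    rw [hw, hLsplit, Nat.mul_sub]
    congr 1
    ring
  have hpos : 0 < t * p ^ L - w := by
    rw [hn]
    have h6 : 0 < t * p ^ (L - v) - u := by omega
    positivity
  refine ⟨hpos, ?_⟩
  rw [hval]
  apply val_eq' hp hpos
  · rw [hn]; exact ⟨_, rfl⟩
  · rintro ⟨c, hc⟩
    rw [hn, pow_succ'] at hc
    have hc2 : t * p ^ (L - v) - u = p * c := by
      have hpvpos : 0 < p ^ v := by positivity
      have h5 : p ^ v * (t * p ^ (L - v) - u) = p ^ v * (p * c) := by rw [hc]; ring
      exact Nat.eq_of_mul_eq_mul_left hpvpos h5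
    apply hpu
    have hdvd1 : p ∣ t * p ^ (L - v) :=
      Dvd.dvd.mul_left (dvd_pow_self p (by omega)) t
    have hdvd2 : p ∣ t * p ^ (L - v) - (t * p ^ (L - v) - u) := Nat.dvd_sub hdvd1 ⟨c, hc2⟩
    have h6 : t * p ^ (L - v) - (t * p ^ (L - v) - u) = u := by omega
    rwa [h6] at hdvd2

lemma decomp' (hp : 1 < p) (L x : ℕ) :
    x = x / p ^ (L+1) * p ^ (L+1) + digit p L x * p ^ L + x % p ^ L := by
  have h1 := Nat.div_add_mod' x (p ^ (L+1))
  have h2 := Nat.div_add_mod' (x % p ^ (L+1)) (p ^ L)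
  rw [Nat.mod_mod_of_dvd _ (pow_dvd_pow _ (Nat.le_succ L)), ← digit_eq'] at h2
  omega

lemma digit_high' (hp : 1 < p) {L ℓ A r : ℕ} (hr : r < p ^ (L+1)) (hℓ : L < ℓ) :
    digit p ℓ (A * p ^ (L+1) + r) = digit p (ℓ - (L+1)) A := by
  unfold digit
  have h1 : p ^ ℓ = p ^ (L+1) * p ^ (ℓ - (L+1)) := by rw [← pow_add]; congr 1; omega
  rw [h1, ← Nat.div_div_eq_div_mul]
  congr 2
  rw [add_comm, Nat.add_mul_div_right _ _ (by positivity : (0:ℕ) < p ^ (L+1)),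
    Nat.div_eq_of_lt hr]
  omega

lemma digit_mid' (hp : 1 < p) {L A e B : ℕ} (he : e < p) (hB : B < p ^ L) :
    digit p L (A * p ^ (L+1) + e * p ^ L + B) = e := by
  unfold digit
  have h1 : A * p ^ (L+1) + e * p ^ L + B = B + (A * p + e) * p ^ L := by
    rw [pow_succ]; ring
  rw [h1, Nat.add_mul_div_right _ _ (by positivity : (0:ℕ) < p ^ L), Nat.div_eq_of_lt hB,
    zero_add, add_comm, Nat.add_mul_mod_self_right, Nat.mod_eq_of_lt he]

lemma digit_low' (hp : 1 < p) {ℓ L A e B : ℕ} (hℓ : ℓ < L) :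
    digit p ℓ (A * p ^ (L+1) + e * p ^ L + B) = digit p ℓ B := by
  rw [digit_eq', digit_eq']
  congr 1
  have h1 : p ^ (ℓ+1) ∣ A * p ^ (L+1) + e * p ^ L := by
    apply Nat.dvd_add
    · exact Dvd.dvd.mul_left (pow_dvd_pow _ (by omega)) A
    · exact Dvd.dvd.mul_left (pow_dvd_pow _ (by omega)) e
  obtain ⟨c, hc⟩ := h1
  rw [hc, Nat.mul_add_mod]

lemma ord_final' {p m : ℕ} (Δ : Fin m → ℕ) (j : Fin m) (V : ℕ)
    (hSum : ∑ i, Δ i ≠ 0) (hj : Δ j ≠ 0)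
    (hvS : padicValNat p (∑ i, Δ i) = V) (hvj : padicValNat p (Δ j) = V)
    (hle : ∀ i, Δ i ≠ 0 → V ≤ padicValNat p (Δ i)) :
    ordE p (∑ i, Δ i) = ⨅ i, ordE p (Δ i) := by
  have h1 : ordE p (∑ i, Δ i) = (V : ℕ∞) := by
    simp only [ordE]; rw [if_neg hSum, hvS]
  rw [h1]
  apply le_antisymm
  · apply le_iInf
    intro i
    by_cases h : Δ i = 0
    · simp only [ordE]; rw [if_pos h]; exact le_top
    · simp only [ordE]; rw [if_neg h]; exact_mod_cast hle i h
  · have h2 : ordE p (Δ j) = (V : ℕ∞) := by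
      simp only [ordE]; rw [if_neg hj, hvj]
    calc ⨅ i, ordE p (Δ i) ≤ ordE p (Δ j) := iInf_le _ j
      _ = (V : ℕ∞) := h2

end aux

theorem stmt2 (p m : ℕ) (hp : 1 < p) (hm : 1 ≤ m) (xs : Fin m → ℕ) (h : ℕ)
    (hh : h < oplusSum p Finset.univ xs) :
    ∃ ys : Fin m → ℕ, (∀ i, ys i ≤ xs i) ∧ oplusSum p Finset.univ ys = h ∧
      (Finset.univ.filter fun i => xs i ≠ ys i).card < min p (m + 1) ∧
      ordE p (∑ i, (xs i - ys i)) = ⨅ i, ordE p (xs i - ys i) := by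
  classical
  obtain ⟨L, hL1, hL2⟩ := exists_top_digit' hp hh
  have hpP : 0 < p ^ L := by positivity
  have hXdig : ∀ ℓ, digit p ℓ (oplusSum p Finset.univ xs)
      = (∑ i, digit p ℓ (xs i)) % p := fun ℓ => digit_oplusSum' hp _ _ ℓ
  have hL1' : digit p L h < (∑ i, digit p L (xs i)) % p := by rw [← hXdig]; exact hL1
  obtain ⟨d, hd_def⟩ : ∃ d, d = (∑ i, digit p L (xs i)) % p - digit p L h := ⟨_, rfl⟩
  have hd0 : 0 < d := by omega
  have hdp : d < p := by
    have := Nat.mod_lt (∑ i, digit p L (xs i)) (y := p) (by omega)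
    omega
  have hdSa : d ≤ ∑ i, digit p L (xs i) := by
    have := Nat.mod_le (∑ i, digit p L (xs i)) p
    omega
  obtain ⟨t, ht1, -, ht3, ht4⟩ :=
    greedy' Finset.univ (fun i => digit p L (xs i)) d (by simpa using hdSa)
  obtain ⟨j, -, htj⟩ := Finset.exists_ne_zero_of_sum_ne_zero (by rw [ht3]; omega)
  set c : ℕ → ℕ :=
    fun ℓ => (digit p ℓ h + (p-1) * ∑ i ∈ Finset.univ.erase j, digit p ℓ (xs i)) % p
    with hc_def
  obtain ⟨B, hBlt, hBdig⟩ : ∃ B, B < p ^ L ∧ ∀ ℓ, digit p ℓ B = if ℓ < L then c ℓ else 0 :=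
    ⟨∑ ℓ ∈ Finset.range L, c ℓ * p ^ ℓ,
      digitSum_lt' hp (fun ℓ _ => Nat.mod_lt _ (by omega)),
      fun ℓ => digit_digitSum' hp (fun ℓ' _ => Nat.mod_lt _ (by omega)) ℓ⟩
  set ys : Fin m → ℕ := fun i =>
    xs i / p ^ (L+1) * p ^ (L+1) + (digit p L (xs i) - t i) * p ^ L
      + (if i = j then B else xs i % p ^ L) with hys_set
  have hys_def : ∀ i, ys i = xs i / p ^ (L+1) * p ^ (L+1)
      + (digit p L (xs i) - t i) * p ^ L + (if i = j then B else xs i % p ^ L) :=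
    fun i => rfl
  have hlow_lt : ∀ i, (if i = j then B else xs i % p ^ L) < p ^ L := by
    intro i; split
    · exact hBlt
    · exact Nat.mod_lt _ hpP
  have hdig_lt : ∀ i, digit p L (xs i) < p := fun i => digit_lt' hp _ _
  have he_lt : ∀ i, digit p L (xs i) - t i < p :=
    fun i => lt_of_le_of_lt (Nat.sub_le _ _) (hdig_lt i)
  have hmul1 : ∀ i, (digit p L (xs i) - t i) * p ^ L + t i * p ^ L
      = digit p L (xs i) * p ^ L := by
    intro i; rw [← add_mul, Nat.sub_add_cancel (ht1 i)]
  have hdecomp : ∀ i, xs i = xs i / p ^ (L+1) * p ^ (L+1)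
      + digit p L (xs i) * p ^ L + xs i % p ^ L := fun i => decomp' hp L (xs i)
  have hys_eq : ∀ i, t i = 0 → ys i = xs i := by
    intro i h0
    have hij : i ≠ j := fun he => htj (he ▸ h0)
    rw [hys_def i, if_neg hij, h0, Nat.sub_zero]
    exact (hdecomp i).symm
  have ht1' : ∀ i, t i ≤ digit p L (xs i) := ht1
  have hys_le : ∀ i, ys i ≤ xs i := by
    intro i
    rcases Nat.eq_zero_or_pos (t i) with h0 | h0
    · rw [hys_eq i h0]
    · have hinner : (digit p L (xs i) - t i) * p ^ L + (if i = j then B else xs i % p ^ L)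
          ≤ digit p L (xs i) * p ^ L + xs i % p ^ L := by
        have h1 : (digit p L (xs i) - t i) * p ^ L + (if i = j then B else xs i % p ^ L)
            < (digit p L (xs i) - t i + 1) * p ^ L := by
          have := hlow_lt i
          rw [add_mul, one_mul]
          omega
        have h2 : (digit p L (xs i) - t i + 1) * p ^ L ≤ digit p L (xs i) * p ^ L :=
          Nat.mul_le_mul_right _ (by have := ht1' i; omega)
        exact le_trans (le_trans (Nat.le_of_lt h1) h2) (Nat.le_add_right _ _)
      calc ys i = xs i / p ^ (L+1) * p ^ (L+1)
            + ((digit p L (xs i) - t i) * p ^ L + (if i = j then B else xs i % p ^ L)) := by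
            rw [hys_def i, add_assoc]
        _ ≤ xs i / p ^ (L+1) * p ^ (L+1) + (digit p L (xs i) * p ^ L + xs i % p ^ L) :=
            Nat.add_le_add_left hinner _
        _ = xs i := by rw [← add_assoc, ← hdecomp i]
  have hr_lt : ∀ i, (digit p L (xs i) - t i) * p ^ L
      + (if i = j then B else xs i % p ^ L) < p ^ (L+1) := by
    intro i
    have h1 : (digit p L (xs i) - t i) * p ^ L ≤ (p-1) * p ^ L :=
      Nat.mul_le_mul_right _ (by have := he_lt i; omega)
    have h2 : (p-1) * p ^ L + p ^ L = p ^ (L+1) := by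
      rw [pow_succ]
      have h5 : p - 1 + 1 = p := by omega
      calc (p-1) * p ^ L + p ^ L = ((p-1)+1) * p ^ L := by ring
        _ = p ^ L * p := by rw [h5]; ring
    have h3 := hlow_lt i
    omega
  have hrx_lt : ∀ i, digit p L (xs i) * p ^ L + xs i % p ^ L < p ^ (L+1) := by
    intro i
    have h1 : digit p L (xs i) * p ^ L ≤ (p-1) * p ^ L :=
      Nat.mul_le_mul_right _ (by have := hdig_lt i; omega)
    have h2 : (p-1) * p ^ L + p ^ L = p ^ (L+1) := by
      rw [pow_succ]
      have h5 : p - 1 + 1 = p := by omega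
      calc (p-1) * p ^ L + p ^ L = ((p-1)+1) * p ^ L := by ring
        _ = p ^ L * p := by rw [h5]; ring
    have h3 : xs i % p ^ L < p ^ L := Nat.mod_lt _ hpP
    omega
  have hdig_hi : ∀ i ℓ, L < ℓ → digit p ℓ (ys i) = digit p ℓ (xs i) := by
    intro i ℓ hℓ
    have e1 : ys i = xs i / p ^ (L+1) * p ^ (L+1)
        + ((digit p L (xs i) - t i) * p ^ L + (if i = j then B else xs i % p ^ L)) := by
      rw [hys_def i, add_assoc]
    have e2 : xs i = xs i / p ^ (L+1) * p ^ (L+1)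
        + (digit p L (xs i) * p ^ L + xs i % p ^ L) := by
      conv_lhs => rw [hdecomp i]
      rw [add_assoc]
    rw [e1, digit_high' hp (hr_lt i) hℓ]
    conv_rhs => rw [e2]
    rw [digit_high' hp (hrx_lt i) hℓ]
  have hdig_mid : ∀ i, digit p L (ys i) = digit p L (xs i) - t i := by
    intro i; rw [hys_def i]; exact digit_mid' hp (he_lt i) (hlow_lt i)
  have hdig_lo : ∀ i ℓ, ℓ < L →
      digit p ℓ (ys i) = digit p ℓ (if i = j then B else xs i % p ^ L) := by
    intro i ℓ hℓ; rw [hys_def i]; exact digit_low' hp hℓ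
  -- oplusSum ys = h
  have hoplus : oplusSum p Finset.univ ys = h := by
    apply digit_ext' hp
    intro ℓ
    rw [digit_oplusSum' hp]
    rcases lt_trichotomy ℓ L with hcase | hcase | hcase
    · rw [← Finset.add_sum_erase _ _ (Finset.mem_univ j)]
      have e1 : digit p ℓ (ys j) = c ℓ := by
        rw [hdig_lo j ℓ hcase, if_pos rfl, hBdig ℓ, if_pos hcase]
      have e2 : ∑ i ∈ Finset.univ.erase j, digit p ℓ (ys i)
          = ∑ i ∈ Finset.univ.erase j, digit p ℓ (xs i) := by
        apply Finset.sum_congr rfl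
        intro i hi
        rw [hdig_lo i ℓ hcase, if_neg (Finset.ne_of_mem_erase hi), digit_mod_pow' hcase]
      rw [e1, e2]
      show ((digit p ℓ h + (p-1) * ∑ i ∈ Finset.univ.erase j, digit p ℓ (xs i)) % p
          + ∑ i ∈ Finset.univ.erase j, digit p ℓ (xs i)) % p = digit p ℓ h
      rw [Nat.mod_add_mod]
      have e3 : digit p ℓ h + (p-1) * ∑ i ∈ Finset.univ.erase j, digit p ℓ (xs i)
          + ∑ i ∈ Finset.univ.erase j, digit p ℓ (xs i)
          = digit p ℓ h + p * ∑ i ∈ Finset.univ.erase j, digit p ℓ (xs i) := by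
        have h5 : p - 1 + 1 = p := by omega
        have h6 : (p-1) * ∑ i ∈ Finset.univ.erase j, digit p ℓ (xs i)
            + ∑ i ∈ Finset.univ.erase j, digit p ℓ (xs i)
            = p * ∑ i ∈ Finset.univ.erase j, digit p ℓ (xs i) := by
          calc (p-1) * ∑ i ∈ Finset.univ.erase j, digit p ℓ (xs i)
              + ∑ i ∈ Finset.univ.erase j, digit p ℓ (xs i)
              = ((p-1)+1) * ∑ i ∈ Finset.univ.erase j, digit p ℓ (xs i) := by ring
            _ = p * ∑ i ∈ Finset.univ.erase j, digit p ℓ (xs i) := by rw [h5]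
        omega
      rw [e3, Nat.add_mul_mod_self_left, Nat.mod_eq_of_lt (digit_lt' hp ℓ h)]
    · subst hcase
      rw [Finset.sum_congr rfl (fun i _ => hdig_mid i)]
      have e2 : ∑ i, (digit p ℓ (xs i) - t i) + d = ∑ i, digit p ℓ (xs i) := by
        rw [← ht3, ← Finset.sum_add_distrib]
        exact Finset.sum_congr rfl (fun i _ => Nat.sub_add_cancel (ht1 i))
      have h1 := Nat.div_add_mod (∑ i, digit p ℓ (xs i)) p
      have e3 : ∑ i, (digit p ℓ (xs i) - t i)
          = p * ((∑ i, digit p ℓ (xs i)) / p) + digit p ℓ h := by omega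
      rw [e3, Nat.mul_add_mod, Nat.mod_eq_of_lt (digit_lt' hp ℓ h)]
    · rw [Finset.sum_congr rfl (fun i _ => hdig_hi i ℓ hcase), ← hXdig ℓ,
        ← hL2 ℓ hcase]
  -- Hamming distance
  have hsubset : (Finset.univ.filter fun i => xs i ≠ ys i)
      ⊆ Finset.univ.filter (fun i => t i ≠ 0) := by
    intro i hi
    rw [Finset.mem_filter] at hi ⊢
    exact ⟨Finset.mem_univ i, fun h0 => hi.2 (hys_eq i h0).symm⟩
  have hcard : (Finset.univ.filter fun i => xs i ≠ ys i).card ≤ d :=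
    le_trans (Finset.card_le_card hsubset) ht4
  have hcardm : (Finset.univ.filter fun i => xs i ≠ ys i).card ≤ m := by
    calc (Finset.univ.filter fun i => xs i ≠ ys i).card
        ≤ Finset.univ.card := Finset.card_filter_le _ _
      _ = m := by simp
  -- differences
  have htjd : t j ≤ d := ht3 ▸ Finset.single_le_sum (fun i _ => Nat.zero_le _) (Finset.mem_univ j)
  have htj0 : 0 < t j := Nat.pos_of_ne_zero htj
  have htjp : t j < p := lt_of_le_of_lt (ht1 j) (hdig_lt j)
  have hdelta : ∀ i, i ≠ j → xs i - ys i = t i * p ^ L := by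
    intro i hij
    have h4 := hmul1 i
    have h5 := hdecomp i
    rw [hys_def i, if_neg hij]
    omega
  have hsum_erase : ∑ i ∈ Finset.univ.erase j, (xs i - ys i) = (d - t j) * p ^ L := by
    have e1 : ∑ i ∈ Finset.univ.erase j, (xs i - ys i)
        = ∑ i ∈ Finset.univ.erase j, t i * p ^ L :=
      Finset.sum_congr rfl (fun i hi => hdelta i (Finset.ne_of_mem_erase hi))
    have e2 : ∑ i ∈ Finset.univ.erase j, t i = d - t j := by
      have := Finset.add_sum_erase Finset.univ t (Finset.mem_univ j)
      omega
    rw [e1, ← Finset.sum_mul, e2]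
  have hsum_split : ∑ i, (xs i - ys i) = (xs j - ys j) + (d - t j) * p ^ L := by
    rw [← Finset.add_sum_erase Finset.univ _ (Finset.mem_univ j), hsum_erase]
  have hmulsub : (d - t j) * p ^ L + t j * p ^ L = d * p ^ L := by
    rw [← add_mul, Nat.sub_add_cancel htjd]
  have hPle : p ^ L ≤ t j * p ^ L := Nat.le_mul_of_pos_left _ htj0
  have hxj := hdecomp j
  have hmj := hmul1 j
  have hysj : ys j = xs j / p ^ (L+1) * p ^ (L+1)
      + (digit p L (xs j) - t j) * p ^ L + B := by
    rw [hys_def j, if_pos rfl]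
  have hdP0 : 0 < d * p ^ L := by positivity
  refine ⟨ys, hys_le, hoplus, lt_min (by omega) (by omega), ?_⟩
  rcases lt_trichotomy (xs j % p ^ L) B with hw | hw | hw
  · -- xs j % p^L < B
    obtain ⟨r, hrP, hr_def⟩ : ∃ r, r < p ^ L ∧ xs j % p ^ L = r := ⟨_, Nat.mod_lt _ hpP, rfl⟩
    rw [hr_def] at hxj hw
    obtain ⟨w, hw_def⟩ : ∃ w, w = B - r := ⟨_, rfl⟩
    have hw_sum : r + w = B := by omega
    have hw0 : 0 < w := by omega
    have hwP : w < p ^ L := by omega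
    have hΔj : xs j - ys j = t j * p ^ L - w := by
      rw [hysj]; omega
    obtain ⟨hpos_j, hvj⟩ := val_sub_w' hp htj0 htjp hw0 hwP
    obtain ⟨hpos_d, hvd⟩ := val_sub_w' hp hd0 hdp hw0 hwP
    have hSumEq : ∑ i, (xs i - ys i) = d * p ^ L - w := by
      rw [hsum_split, hΔj]; omega
    obtain ⟨v, u, hvL, -, -, -, -, hvalw⟩ := w_decomp' hp hw0 hwP
    refine ord_final' _ j v (by omega) (by omega) ?_ ?_ ?_
    · rw [hSumEq, hvd, hvalw]
    · rw [hΔj, hvj, hvalw]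
    · intro i hi
      by_cases hij : i = j
      · subst hij; rw [hΔj, hvj, hvalw]
      · rw [hdelta i hij] at hi ⊢
        have ht0 : 0 < t i := by
          rcases Nat.eq_zero_or_pos (t i) with h0 | h0
          · rw [h0, zero_mul] at hi; exact absurd rfl hi
          · exact h0
        rw [val_mul_pow' hp ht0 (lt_of_le_of_lt (ht1 i) (hdig_lt i))]
        omega
  · -- equal
    have hΔj : xs j - ys j = t j * p ^ L := by rw [hysj]; omega
    have hSumEq : ∑ i, (xs i - ys i) = d * p ^ L := by rw [hsum_split, hΔj]; omega
    refine ord_final' _ j L (by omega) (by omega) ?_ ?_ ?_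
    · rw [hSumEq]; exact val_mul_pow' hp hd0 hdp
    · rw [hΔj]; exact val_mul_pow' hp htj0 htjp
    · intro i hi
      by_cases hij : i = j
      · subst hij; rw [hΔj, val_mul_pow' hp htj0 htjp]
      · rw [hdelta i hij] at hi ⊢
        have ht0 : 0 < t i := by
          rcases Nat.eq_zero_or_pos (t i) with h0 | h0
          · rw [h0, zero_mul] at hi; exact absurd rfl hi
          · exact h0
        rw [val_mul_pow' hp ht0 (lt_of_le_of_lt (ht1 i) (hdig_lt i))]
  · -- B < xs j % p^L
    obtain ⟨r, hrP, hr_def⟩ : ∃ r, r < p ^ L ∧ xs j % p ^ L = r := ⟨_, Nat.mod_lt _ hpP, rfl⟩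
    rw [hr_def] at hxj hw
    obtain ⟨w, hw_def⟩ : ∃ w, w = r - B := ⟨_, rfl⟩
    have hw_sum : B + w = r := by omega
    have hw0 : 0 < w := by omega
    have hwP : w < p ^ L := by omega
    have hΔj : xs j - ys j = t j * p ^ L + w := by
      rw [hysj]; omega
    have hvj := val_add_w' hp htj0 htjp hw0 hwP
    have hvd := val_add_w' hp hd0 hdp hw0 hwP
    have hSumEq : ∑ i, (xs i - ys i) = d * p ^ L + w := by
      rw [hsum_split, hΔj]; omega
    obtain ⟨v, u, hvL, -, -, -, -, hvalw⟩ := w_decomp' hp hw0 hwP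
    refine ord_final' _ j v (by omega) (by omega) ?_ ?_ ?_
    · rw [hSumEq, hvd, hvalw]
    · rw [hΔj, hvj, hvalw]
    · intro i hi
      by_cases hij : i = j
      · subst hij; rw [hΔj, hvj, hvalw]
      · rw [hdelta i hij] at hi ⊢
        have ht0 : 0 < t i := by
          rcases Nat.eq_zero_or_pos (t i) with h0 | h0
          · rw [h0, zero_mul] at hi; exact absurd rfl hi
          · exact h0
        rw [val_mul_pow' hp ht0 (lt_of_le_of_lt (ht1 i) (hdig_lt i))]
        omega
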